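/- For every k ≥ 2, s ≥ 0 and prime power q, m^s(k,q) ≤ (s+1)(q+1) + k − 2: every non-degenerate [n,k,d]_q code with Singleton defect s has n ≤ (s+1)(q+1)+k−2. -/

import Mathlib

/-- The number of points (with multiplicity) of the projective system `G`
lying on the hyperplane `ker φ`. -/
noncomputable def hypCount {F : Type*} [Field F] [DecidableEq F] {n k : ℕ}
    (G : Fin n → Fin k → F) (φ : (Fin k → F) →ₗ[F] F) : ℕ :=
  (Finset.univ.filter fun i => φ (G i) = 0).card

/-- `G` is (the projective system of) a non-degenerate linear `[n,k,d]_q` code: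
an `n`-multiset of nonzero points spanning `PG(k-1,q)`, every hyperplane containing
at most `n - d` points, and some hyperplane (a secant) containing exactly `n - d`. -/
def IsCodePS (F : Type*) [Field F] [DecidableEq F] (n k d : ℕ)
    (G : Fin n → Fin k → F) : Prop :=
  0 < d ∧ (∀ i, G i ≠ 0) ∧ Submodule.span F (Set.range G) = ⊤ ∧
  (∀ φ : (Fin k → F) →ₗ[F] F, φ ≠ 0 → hypCount G φ + d ≤ n) ∧
  (∃ φ : (Fin k → F) →ₗ[F] F, φ ≠ 0 ∧ hypCount G φ + d = n)

open Module Finset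

set_option maxHeartbeats 1000000 in
/-- For `k ≥ 2`, every non-degenerate `[n,k,d]_q` code with Singleton defect `s`
has `n ≤ (s+1)(q+1) + k - 2`; that is, `m^s(k,q) ≤ (s+1)(q+1) + k - 2`. -/
theorem length_le_of_defect (F : Type*) [Field F] [Fintype F] [DecidableEq F]
    (n k d s : ℕ) (G : Fin n → Fin k → F)
    (hk : 2 ≤ k) (hG : IsCodePS F n k d G) (hs : d + k + s = n + 1) :
    n + 2 ≤ (s + 1) * (Fintype.card F + 1) + k := by
  classical
  obtain ⟨hd, -, hspan, hub, -⟩ := hG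
  set q := Fintype.card F with hqdef
  have hq2 : 2 ≤ q := Fintype.one_lt_card
  -- independent spanning set
  obtain ⟨b, hbsub, hbspan, hbli⟩ := exists_linearIndependent F (Set.range G)
  rw [hspan] at hbspan
  haveI : Fintype b := (Set.toFinite b).fintype
  have hbcard : b.toFinset.card = k := by
    have h := finrank_span_set_eq_card hbli
    rw [hbspan, finrank_top, Module.finrank_fin_fun] at h
    omega
  obtain ⟨T, hTsub, hTcard⟩ := Finset.exists_subset_card_eq (show k - 2 ≤ b.toFinset.card by omega)
  set P : Submodule F (Fin k → F) := Submodule.span F (T : Set (Fin k → F)) with hPdef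
  have hTsubset : (T : Set (Fin k → F)) ⊆ b := by
    intro x hx
    have : x ∈ b.toFinset := hTsub (by simpa using hx)
    simpa using this
  have hTli : LinearIndependent F (fun x : (T : Set (Fin k → F)) => (x : Fin k → F)) :=
    (show LinearIndepOn F id b from hbli).mono hTsubset
  have hPfr : finrank F P = k - 2 := by
    haveI : Fintype ((T : Set (Fin k → F)) : Set (Fin k → F)) := FinsetCoe.fintype T
    rw [hPdef, finrank_span_set_eq_card hTli]
    simpa using hTcard
  -- the dual annihilator W
  let W : Submodule F ((Fin k → F) →ₗ[F] F) := P.dualAnnihilator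
  haveI : Finite ((Fin k → F) →ₗ[F] F) := Finite.of_injective _ LinearMap.coe_injective
  haveI : Fintype ((Fin k → F) →ₗ[F] F) := Fintype.ofFinite _
  haveI : Fintype W := Fintype.ofFinite _
  have hWfr : finrank F W = 2 := by
    show finrank F P.dualAnnihilator = 2
    have h3 : finrank F ((Fin k → F) ⧸ P) = finrank F P.dualAnnihilator :=
      LinearEquiv.finrank_eq (Subspace.quotEquivAnnihilator P)
    have h2 : finrank F ((Fin k → F) ⧸ P) + finrank F P = k := by
      simpa [Module.finrank_fin_fun] using Submodule.finrank_quotient_add_finrank P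
    rw [h3, hPfr] at h2
    omega
  have hWcard : Fintype.card W = q ^ 2 := by
    rw [card_eq_pow_finrank (K := F) (V := W), hWfr]
  -- per-point counts
  set c : Fin n → ℕ :=
    fun i => (Finset.univ.filter fun φ : W => (φ : (Fin k → F) →ₗ[F] F) (G i) = 0).card with hcdef
  -- double counting
  have hdouble : ∑ φ : W, hypCount G (φ : (Fin k → F) →ₗ[F] F) = ∑ i, c i := by
    simp only [hypCount, hcdef, Finset.card_filter]
    exact Finset.sum_comm
  -- upper bound
  have hupper : ∑ φ : W, hypCount G (φ : (Fin k → F) →ₗ[F] F) ≤ n + (q ^ 2 - 1) * (k + s - 1) := by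
    have hb : ∀ φ ∈ Finset.univ.erase (0 : W),
        hypCount G (φ : (Fin k → F) →ₗ[F] F) ≤ k + s - 1 := by
      intro φ hφ
      have hφ0 : (φ : (Fin k → F) →ₗ[F] F) ≠ 0 := by
        simpa [Submodule.coe_eq_zero] using Finset.ne_of_mem_erase hφ
      have := hub _ hφ0
      omega
    have h2 := Finset.sum_le_card_nsmul (Finset.univ.erase (0 : W)) _ (k + s - 1) hb
    rw [Finset.card_erase_of_mem (Finset.mem_univ _), Finset.card_univ, hWcard] at h2
    have h0 : hypCount G ((0 : W) : (Fin k → F) →ₗ[F] F) = n := by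
      simp [hypCount]
    calc ∑ φ : W, hypCount G (φ : (Fin k → F) →ₗ[F] F)
        = ∑ φ ∈ Finset.univ.erase (0 : W), hypCount G (φ : (Fin k → F) →ₗ[F] F)
            + hypCount G ((0 : W) : (Fin k → F) →ₗ[F] F) :=
          (Finset.sum_erase_add _ _ (Finset.mem_univ (0 : W))).symm
      _ ≤ (q ^ 2 - 1) • (k + s - 1) + n := by rw [h0]; exact Nat.add_le_add_right h2 n
      _ = n + (q ^ 2 - 1) * (k + s - 1) := by rw [smul_eq_mul, Nat.add_comm]
  -- index sets
  set A := Finset.univ.filter (fun i => G i ∈ P) with hAdef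
  set A' := Finset.univ.filter (fun i => ¬ G i ∈ P) with hA'def
  have hAcard : k - 2 ≤ A.card := by
    have h1 : T ⊆ Finset.image G A := by
      intro v hv
      have hvb : v ∈ b := hTsubset (by simpa using hv)
      obtain ⟨i, hi⟩ := hbsub hvb
      refine Finset.mem_image.mpr ⟨i, ?_, hi⟩
      simp only [hAdef, Finset.mem_filter, Finset.mem_univ, true_and]
      rw [hi]
      exact Submodule.subset_span (by exact_mod_cast hv)
    calc k - 2 = T.card := hTcard.symm
      _ ≤ (Finset.image G A).card := Finset.card_le_card h1
      _ ≤ A.card := Finset.card_image_le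
  have hAA' : A.card + A'.card = n := by
    rw [hAdef, hA'def]
    simpa using Finset.card_filter_add_card_filter_not (s := Finset.univ)
      (p := fun i => G i ∈ P)
  -- lower bounds for c
  have hcA : ∀ i ∈ A, c i = q ^ 2 := by
    intro i hi
    have hiP : G i ∈ P := by simpa [hAdef] using hi
    have hfil : (Finset.univ.filter fun φ : W =>
        (φ : (Fin k → F) →ₗ[F] F) (G i) = 0) = Finset.univ := by
      refine Finset.filter_true_of_mem fun φ _ => ?_
      exact (Submodule.mem_dualAnnihilator _).mp φ.2 (G i) hiP
    simp only [hcdef]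
    rw [hfil, Finset.card_univ, hWcard]
  have hcq : ∀ i, q ≤ c i := by
    intro i
    set ev : W →ₗ[F] F :=
      { toFun := fun φ => (φ : (Fin k → F) →ₗ[F] F) (G i)
        map_add' := fun φ ψ => rfl
        map_smul' := fun a φ => rfl } with hev
    have hc1 : c i = Fintype.card (LinearMap.ker ev) := by
      simp only [hcdef]
      rw [← Fintype.card_subtype]
      refine Fintype.card_congr (Equiv.subtypeEquivRight fun φ => ?_)
      exact (LinearMap.mem_ker (f := ev)).symm
    have h5 : finrank F (LinearMap.range ev) + finrank F (LinearMap.ker ev) = 2 := by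
      haveI : FiniteDimensional F W := Module.Finite.of_finite
      have h := LinearMap.finrank_range_add_finrank_ker (K := F) (V := W) (V₂ := F) ev
      rw [← hWfr]; exact h
    have h6 : finrank F (LinearMap.range ev) ≤ 1 := by
      simpa [Module.finrank_self] using Submodule.finrank_le (LinearMap.range ev)
    have h7 : 1 ≤ finrank F (LinearMap.ker ev) := by omega
    letI : AddCommGroup ((Fin k → F) →ₗ[F] F) := LinearMap.addCommGroup
    rw [hc1, Module.card_eq_pow_finrank (K := F) (V := LinearMap.ker ev)]
    calc q = q ^ 1 := (pow_one q).symm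
      _ ≤ _ := Nat.pow_le_pow_right (by omega) h7
  -- sum lower bound
  have e1 : ∑ i ∈ A, c i = A.card * q ^ 2 := by
    rw [Finset.sum_congr rfl hcA, Finset.sum_const, smul_eq_mul]
  have e2 : A'.card * q ≤ ∑ i ∈ A', c i := by
    simpa [smul_eq_mul] using Finset.card_nsmul_le_sum A' c q (fun i _ => hcq i)
  have e3 : ∑ i ∈ A, c i + ∑ i ∈ A', c i = ∑ i, c i := by
    rw [hAdef, hA'def]
    exact Finset.sum_filter_add_sum_filter_not _ _ _
  have Hmain : A.card * q ^ 2 + A'.card * q ≤ n + (q ^ 2 - 1) * (k + s - 1) := by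
    have := hdouble ▸ hupper
    linarith
  -- pass to integers
  have hq2' : (2 : ℤ) ≤ (q : ℤ) := by exact_mod_cast hq2
  have hk' : (2 : ℤ) ≤ (k : ℤ) := by exact_mod_cast hk
  have h1q2 : 1 ≤ q ^ 2 := Nat.one_le_pow _ _ (by omega)
  have h1ks : 1 ≤ k + s := by omega
  zify [h1q2, h1ks] at Hmain
  have ha : (k : ℤ) - 2 ≤ (A.card : ℤ) := by
    have := hAcard
    zify [hk] at this
    linarith
  have hn' : (A.card : ℤ) + (A'.card : ℤ) = (n : ℤ) := by exact_mod_cast hAA'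
  have hqmul : ((A.card : ℤ) + (A'.card : ℤ)) * (q : ℤ) = (n : ℤ) * (q : ℤ) := by rw [hn']
  have key : (n : ℤ) * ((q : ℤ) - 1) ≤ ((s + 1) * ((q : ℤ) + 1) + (k : ℤ) - 2) * ((q : ℤ) - 1) := by
    nlinarith [mul_nonneg (sub_nonneg.mpr ha) (show (0 : ℤ) ≤ (q : ℤ) ^ 2 - (q : ℤ) by nlinarith)]
  have hfin : (n : ℤ) ≤ (s + 1) * ((q : ℤ) + 1) + (k : ℤ) - 2 :=
    le_of_mul_le_mul_right key (by linarith)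
  zify
  linarith
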